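/- arXiv:1005.0453 — 3 statements merged into one kernel-verified Lean document; each statement's English description precedes it below -/
import Mathlib

section
/- Let a < b be real numbers and let f : ℝ → ℝ be twice differentiable on an open interval containing [a,b] with f'' Lebesgue integrable on [a,b]. Let p, q > 1 satisfy 1/p + 1/q = 1. If the function x ↦ |f''(x)|^q is convex on [a,b], then |(1/(b−a))·∫_a^b f(x) dx − f((a+b)/2)| ≤ ((b−a)²/(16·(2p+1)^(1/p))) · ( ((|f''(a)|^q + 3·|f''(b)|^q)/4)^(1/q) + ((3·|f''(a)|^q + |f''(b)|^q)/4)^(1/q) ). -/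
open MeasureTheory Set intervalIntegral

lemma my_finite (c d : ℝ) : IsFiniteMeasure (volume.restrict (Set.Ioc c d)) :=
  ⟨by rw [Measure.restrict_apply_univ, Real.volume_Ioc]; exact ENNReal.ofReal_lt_top⟩

lemma holder_piece {c d p q : ℝ} (hcd : c ≤ d) (hpq : Real.HolderConjugate p q)
    (K g : ℝ → ℝ) (hK : Continuous K)
    (hgm : AEStronglyMeasurable g (volume.restrict (Set.Ioc c d)))
    {M : ℝ} (hgb : ∀ x ∈ Set.Ioc c d, |g x| ≤ M) :
    |∫ x in c..d, K x * g x| ≤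
      (∫ x in c..d, |K x| ^ p) ^ (1/p) * (∫ x in c..d, |g x| ^ q) ^ (1/q) := by
  haveI := my_finite c d
  obtain ⟨C, hC⟩ := (isCompact_Icc (a := c) (b := d)).exists_bound_of_continuousOn
    hK.continuousOn
  have hKmem : MemLp K (ENNReal.ofReal p) (volume.restrict (Set.Ioc c d)) :=
    MemLp.of_bound (hK.aestronglyMeasurable.restrict) C <|
      (ae_restrict_iff' measurableSet_Ioc).2 <| .of_forall fun x hx =>
        hC x (Ioc_subset_Icc_self hx)
  have hgmem : MemLp g (ENNReal.ofReal q) (volume.restrict (Set.Ioc c d)) :=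
    MemLp.of_bound hgm M <|
      (ae_restrict_iff' measurableSet_Ioc).2 <| .of_forall fun x hx => hgb x hx
  have H := integral_mul_norm_le_Lp_mul_Lq hpq hKmem hgmem
  calc |∫ x in c..d, K x * g x| ≤ ∫ x in c..d, |K x * g x| :=
        intervalIntegral.abs_integral_le_integral_abs hcd
    _ ≤ _ := by
        rw [intervalIntegral.integral_of_le hcd, intervalIntegral.integral_of_le hcd,
          intervalIntegral.integral_of_le hcd]
        simpa [Real.norm_eq_abs, abs_mul] using H

lemma lin_bound {a b : ℝ} {g : ℝ → ℝ} (hab : a < b)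
    (hconv : ConvexOn ℝ (Set.Icc a b) g) :
    ∀ x ∈ Set.Icc a b, g x ≤ ((b - x) * g a + (x - a) * g b) / (b - a) := by
  intro x hx
  have hba : (0:ℝ) < b - a := by linarith
  have h1 : ((b - x)/(b-a)) • a + ((x-a)/(b-a)) • b = x := by
    rw [smul_eq_mul, smul_eq_mul, div_mul_eq_mul_div, div_mul_eq_mul_div, ← add_div,
      div_eq_iff hba.ne']
    ring
  have h2 := hconv.2 (left_mem_Icc.2 hab.le) (right_mem_Icc.2 hab.le)
    (show (0:ℝ) ≤ (b - x)/(b-a) from div_nonneg (by linarith [hx.2]) hba.le)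
    (show (0:ℝ) ≤ (x - a)/(b-a) from div_nonneg (by linarith [hx.1]) hba.le)
    (show (b - x)/(b-a) + (x-a)/(b-a) = 1 by
      rw [← add_div, div_eq_one_iff_eq hba.ne']; ring)
  rw [h1] at h2
  calc g x ≤ ((b - x)/(b-a)) • g a + ((x-a)/(b-a)) • g b := h2
    _ = ((b - x) * g a + (x - a) * g b) / (b - a) := by
        simp only [smul_eq_mul]; ring

lemma base_integral {h p : ℝ} (hh : 0 ≤ h) (hp : 1 < p) :
    ∫ x in (0:ℝ)..h, |x^2/2| ^ p = h^(2*p+1) / ((2*p+1) * 2^p) := by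
  have h2p : (0:ℝ) < 2*p + 1 := by linarith
  have e : EqOn (fun x : ℝ => |x^2/2| ^ p) (fun x : ℝ => x^(2*p) / 2^p) (uIcc (0:ℝ) h) := by
    intro x hx
    rw [uIcc_of_le hh] at hx
    have hx0 : 0 ≤ x := hx.1
    simp only
    rw [abs_of_nonneg (by positivity), Real.div_rpow (sq_nonneg x) (by norm_num),
      ← Real.rpow_natCast x 2, ← Real.rpow_mul hx0]
    norm_num
  rw [intervalIntegral.integral_congr e, intervalIntegral.integral_div,
    integral_rpow (Or.inl (by linarith : (-1:ℝ) < 2*p)),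
    Real.zero_rpow (by linarith : 2*p+1 ≠ 0), sub_zero, div_div]

lemma lin_integral (A B a b c d : ℝ) (hba : b - a ≠ 0) :
    ∫ x in c..d, ((b - x) * A + (x - a) * B) / (b - a)
      = ((b*A - a*B)*(d - c) + (B - A)*(d^2 - c^2)/2) / (b - a) := by
  have e : ∀ x:ℝ, ((b - x) * A + (x - a) * B) / (b - a)
      = (b*A - a*B)/(b-a) + ((B-A)/(b-a)) * x := fun x => by field_simp; ring
  simp_rw [e]
  rw [intervalIntegral.integral_add intervalIntegrable_const
      ((by fun_prop : Continuous fun x : ℝ => (B-A)/(b-a) * x).intervalIntegrable _ _),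
    intervalIntegral.integral_const, intervalIntegral.integral_const_mul, integral_id]
  simp only [smul_eq_mul]
  field_simp

set_option maxHeartbeats 2000000 in
/-- Corollary: midpoint Hölder-type inequality for |f''|^q convex. -/
theorem stmt_5 (f f' f'' : ℝ → ℝ) (a b u v p q : ℝ) (hab : a < b)
(hua : u < a) (hbv : b < v)
    (hf' : ∀ x ∈ Set.Ioo u v, HasDerivAt f (f' x) x)
    (hf'' : ∀ x ∈ Set.Ioo u v, HasDerivAt f' (f'' x) x)
    (hint : IntervalIntegrable f'' MeasureTheory.volume a b)
    (hp : 1 < p) (hq : 1 < q) (hpq : 1 / p + 1 / q = 1)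
    (hconv : ConvexOn ℝ (Set.Icc a b) (fun x => |f'' x| ^ q)) :
    |(1 / (b - a)) * (∫ x in a..b, f x) - f ((a + b) / 2)|
      ≤ ((b - a) ^ 2 / (16 * (2 * p + 1) ^ (1 / p))) *
          (((|f'' a| ^ q + 3 * |f'' b| ^ q) / 4) ^ (1 / q)
            + ((3 * |f'' a| ^ q + |f'' b| ^ q) / 4) ^ (1 / q)) := by
  have hpq' : Real.HolderConjugate p q := ⟨by rw [inv_one, ← one_div, ← one_div]; exact hpq, by linarith, by linarith⟩
  have hp0 : (0:ℝ) < p := by linarith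
  have hq0 : (0:ℝ) < q := by linarith
  have hba0 : (0:ℝ) < b - a := by linarith
  set A := |f'' a| ^ q with hAdef
  set B := |f'' b| ^ q with hBdef
  have hA0 : 0 ≤ A := Real.rpow_nonneg (abs_nonneg _) _
  have hB0 : 0 ≤ B := Real.rpow_nonneg (abs_nonneg _) _
  set m := (a + b) / 2 with hmdef
  set h := (b - a) / 2 with hhdef
  have ham : a < m := by rw [hmdef]; linarith
  have hmb : m < b := by rw [hmdef]; linarith
  have hh0 : (0:ℝ) < h := by rw [hhdef]; linarith
  have hma : m - a = h := by rw [hmdef, hhdef]; ring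
  have hbm : b - m = h := by rw [hmdef, hhdef]; ring
  set T := (2 * p + 1) ^ (1/p) with hTdef
  have hT0 : (0:ℝ) < T := Real.rpow_pos_of_pos (by linarith) _
  -- subsets and continuity
  have hsub : Set.uIcc a b ⊆ Set.Ioo u v := by
    rw [Set.uIcc_of_le hab.le]
    exact fun x hx => ⟨lt_of_lt_of_le hua hx.1, lt_of_le_of_lt hx.2 hbv⟩
  have hmem_m : m ∈ Set.uIcc a b := by
    rw [Set.uIcc_of_le hab.le]; exact ⟨ham.le, hmb.le⟩
  have hsub1 : Set.uIcc a m ⊆ Set.uIcc a b :=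
    Set.uIcc_subset_uIcc (Set.left_mem_uIcc) hmem_m
  have hsub2 : Set.uIcc m b ⊆ Set.uIcc a b :=
    Set.uIcc_subset_uIcc hmem_m (Set.right_mem_uIcc)
  have hfc : ContinuousOn f (Set.uIcc a b) :=
    fun x hx => ((hf' x (hsub hx)).continuousAt).continuousWithinAt
  have hf'c : ContinuousOn f' (Set.uIcc a b) :=
    fun x hx => ((hf'' x (hsub hx)).continuousAt).continuousWithinAt
  have hfint1 : IntervalIntegrable f volume a m := (hfc.mono hsub1).intervalIntegrable
  have hfint2 : IntervalIntegrable f volume m b := (hfc.mono hsub2).intervalIntegrable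
  have hf'int1 : IntervalIntegrable f' volume a m := (hf'c.mono hsub1).intervalIntegrable
  have hf'int2 : IntervalIntegrable f' volume m b := (hf'c.mono hsub2).intervalIntegrable
  have hint1 : IntervalIntegrable f'' volume a m := hint.mono_set hsub1
  have hint2 : IntervalIntegrable f'' volume m b := hint.mono_set hsub2
  -- integration by parts
  have hu1 : ∀ x : ℝ, HasDerivAt (fun y => (y - a)^2/2) (x - a) x := by
    intro x
    have := (((hasDerivAt_id x).sub_const a).pow 2).div_const 2
    refine this.congr_deriv ?_
    show ((2:ℕ):ℝ) * (x - a) ^ (2 - 1) * 1 / 2 = x - a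
    push_cast
    ring
  have hu3 : ∀ x : ℝ, HasDerivAt (fun y => (y - b)^2/2) (x - b) x := by
    intro x
    have := (((hasDerivAt_id x).sub_const b).pow 2).div_const 2
    refine this.congr_deriv ?_
    show ((2:ℕ):ℝ) * (x - b) ^ (2 - 1) * 1 / 2 = x - b
    push_cast
    ring
  set I₁ := ∫ x in a..m, (x - a)^2/2 * f'' x with hI1def
  set I₂ := ∫ x in m..b, (x - b)^2/2 * f'' x with hI2def
  have ibp1 : I₁ = (m - a)^2/2 * f' m - (a - a)^2/2 * f' a - ∫ x in a..m, (x - a) * f' x := by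
    rw [hI1def]
    exact intervalIntegral.integral_mul_deriv_eq_deriv_mul
      (fun x _ => hu1 x) (fun x hx => hf'' x (hsub (hsub1 hx)))
      ((continuous_id.sub continuous_const).intervalIntegrable a m) hint1
  have ibp2 : (∫ x in a..m, (x - a) * f' x)
      = (m - a) * f m - (a - a) * f a - ∫ x in a..m, 1 * f x :=
    intervalIntegral.integral_mul_deriv_eq_deriv_mul
      (fun x _ => (hasDerivAt_id x).sub_const a) (fun x hx => hf' x (hsub (hsub1 hx)))
      intervalIntegrable_const hf'int1
  have ibp3 : I₂ = (b - b)^2/2 * f' b - (m - b)^2/2 * f' m - ∫ x in m..b, (x - b) * f' x := by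
    rw [hI2def]
    exact intervalIntegral.integral_mul_deriv_eq_deriv_mul
      (fun x _ => hu3 x) (fun x hx => hf'' x (hsub (hsub2 hx)))
      ((continuous_id.sub continuous_const).intervalIntegrable m b) hint2
  have ibp4 : (∫ x in m..b, (x - b) * f' x)
      = (b - b) * f b - (m - b) * f m - ∫ x in m..b, 1 * f x :=
    intervalIntegral.integral_mul_deriv_eq_deriv_mul
      (fun x _ => (hasDerivAt_id x).sub_const b) (fun x hx => hf' x (hsub (hsub2 hx)))
      intervalIntegrable_const hf'int2
  have hIadd : (∫ x in a..m, f x) + ∫ x in m..b, f x = ∫ x in a..b, f x :=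
    intervalIntegral.integral_add_adjacent_intervals hfint1 hfint2
  have hid : (1 / (b - a)) * (∫ x in a..b, f x) - f m = (1/(b-a)) * (I₁ + I₂) := by
    rw [ibp1, ibp3, ibp2, ibp4, ← hIadd]
    simp only [one_mul]
    rw [hmdef]
    field_simp
    ring
  -- measurability and bounds for f''
  have hbnd : ∀ x ∈ Set.Icc a b, |f'' x| ^ q ≤ A + B := by
    intro x hx
    have h1 := lin_bound hab hconv x hx
    have h2 : ((b - x) * A + (x - a) * B) / (b - a) ≤ A + B := by
      rw [div_le_iff₀ hba0]
      nlinarith [mul_nonneg hA0 (sub_nonneg.2 hx.1), mul_nonneg hB0 (sub_nonneg.2 hx.2)]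
    exact le_trans h1 h2
  have hfbd : ∀ x ∈ Set.Ioc a b, |f'' x| ≤ (A + B) ^ (1/q) := by
    intro x hx
    have h1 := hbnd x (Set.Ioc_subset_Icc_self hx)
    have h2 : |f'' x| = (|f'' x| ^ q) ^ (1/q) := by
      rw [one_div, Real.rpow_rpow_inv (abs_nonneg _) hq0.ne']
    rw [h2]
    exact Real.rpow_le_rpow (Real.rpow_nonneg (abs_nonneg _) _) h1 (by positivity)
  have hmeasab : AEStronglyMeasurable f'' (volume.restrict (Set.Ioc a b)) :=
    hint.1.aestronglyMeasurable
  have hmeas1 : AEStronglyMeasurable f'' (volume.restrict (Set.Ioc a m)) :=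
    hmeasab.mono_measure (Measure.restrict_mono (Set.Ioc_subset_Ioc le_rfl hmb.le) le_rfl)
  have hmeas2 : AEStronglyMeasurable f'' (volume.restrict (Set.Ioc m b)) :=
    hmeasab.mono_measure (Measure.restrict_mono (Set.Ioc_subset_Ioc ham.le le_rfl) le_rfl)
  -- Hölder on the two pieces
  have hold1 : |I₁| ≤ (∫ x in a..m, |(x - a)^2/2| ^ p) ^ (1/p)
      * (∫ x in a..m, |f'' x| ^ q) ^ (1/q) := by
    rw [hI1def]
    exact holder_piece ham.le hpq' _ _ (by fun_prop) hmeas1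
      (fun x hx => hfbd x (Set.Ioc_subset_Ioc le_rfl hmb.le hx))
  have hold2 : |I₂| ≤ (∫ x in m..b, |(x - b)^2/2| ^ p) ^ (1/p)
      * (∫ x in m..b, |f'' x| ^ q) ^ (1/q) := by
    rw [hI2def]
    exact holder_piece hmb.le hpq' _ _ (by fun_prop) hmeas2
      (fun x hx => hfbd x (Set.Ioc_subset_Ioc ham.le le_rfl hx))
  -- kernel integrals
  have hker1 : ∫ x in a..m, |(x - a)^2/2| ^ p = h^(2*p+1) / ((2*p+1) * 2^p) := by
    have e := intervalIntegral.integral_comp_sub_right (f := fun y : ℝ => |y^2/2| ^ p)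
      (a := a) (b := m) a
    rw [sub_self, hma] at e
    calc (∫ x in a..m, |(x - a)^2/2| ^ p) = ∫ x in (0:ℝ)..h, |x^2/2| ^ p := e
      _ = _ := base_integral hh0.le hp
  have hker2 : ∫ x in m..b, |(x - b)^2/2| ^ p = h^(2*p+1) / ((2*p+1) * 2^p) := by
    have e := intervalIntegral.integral_comp_sub_left (f := fun y : ℝ => |y^2/2| ^ p)
      (a := m) (b := b) b
    rw [sub_self, hbm] at e
    have e2 : (∫ x in m..b, |(x - b)^2/2| ^ p) = ∫ x in m..b, |(b - x)^2/2| ^ p := by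
      apply intervalIntegral.integral_congr
      intro x _
      simp only
      rw [show (x - b)^2 = (b - x)^2 by ring]
    rw [e2]
    calc (∫ x in m..b, |(b - x)^2/2| ^ p) = ∫ x in (0:ℝ)..h, |x^2/2| ^ p := e
      _ = _ := base_integral hh0.le hp
  have hkfac : (h^(2*p+1) / ((2*p+1) * 2^p)) ^ (1/p) = h^((2*p+1)*(1/p)) / (T * 2) := by
    rw [Real.div_rpow (Real.rpow_nonneg hh0.le _) (by positivity),
      Real.mul_rpow (by linarith : (0:ℝ) ≤ 2*p+1) (by positivity),
      ← Real.rpow_mul hh0.le, ← Real.rpow_mul (by norm_num : (0:ℝ) ≤ 2),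
      mul_one_div_cancel hp0.ne', Real.rpow_one]
  -- convexity integral bounds
  have hGmeas : AEStronglyMeasurable (fun x => |f'' x| ^ q) (volume.restrict (Set.Ioc a b)) :=
    (continuous_abs.rpow_const (fun _ => Or.inr hq0.le)).comp_aestronglyMeasurable hmeasab
  have hGint : IntegrableOn (fun x => |f'' x| ^ q) (Set.Ioc a b) volume := by
    haveI := my_finite a b
    refine Integrable.mono' (integrable_const (A+B)) hGmeas ?_
    refine (ae_restrict_iff' measurableSet_Ioc).2 (.of_forall fun x hx => ?_)
    rw [Real.norm_eq_abs, abs_of_nonneg (Real.rpow_nonneg (abs_nonneg _) _)]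
    exact hbnd x (Set.Ioc_subset_Icc_self hx)
  have hGint1 : IntervalIntegrable (fun x => |f'' x| ^ q) volume a m := by
    rw [intervalIntegrable_iff_integrableOn_Ioc_of_le ham.le]
    exact hGint.mono_set (Set.Ioc_subset_Ioc le_rfl hmb.le)
  have hGint2 : IntervalIntegrable (fun x => |f'' x| ^ q) volume m b := by
    rw [intervalIntegrable_iff_integrableOn_Ioc_of_le hmb.le]
    exact hGint.mono_set (Set.Ioc_subset_Ioc ham.le le_rfl)
  have hLint : ∀ c d : ℝ, IntervalIntegrable
      (fun x => ((b - x) * A + (x - a) * B) / (b - a)) volume c d :=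
    fun c d => Continuous.intervalIntegrable (by fun_prop) c d
  have hconv1 : (∫ x in a..m, |f'' x| ^ q) ≤ h * ((3*A + B)/4) := by
    have hmono : (∫ x in a..m, |f'' x| ^ q)
        ≤ ∫ x in a..m, ((b - x) * A + (x - a) * B) / (b - a) :=
      intervalIntegral.integral_mono_on ham.le hGint1 (hLint a m)
        (fun x hx => lin_bound hab hconv x ⟨hx.1, hx.2.trans hmb.le⟩)
    rw [lin_integral A B a b a m hba0.ne'] at hmono
    refine hmono.trans_eq ?_
    rw [hmdef, hhdef]
    field_simp
    ring
  have hconv2 : (∫ x in m..b, |f'' x| ^ q) ≤ h * ((A + 3*B)/4) := by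
    have hmono : (∫ x in m..b, |f'' x| ^ q)
        ≤ ∫ x in m..b, ((b - x) * A + (x - a) * B) / (b - a) :=
      intervalIntegral.integral_mono_on hmb.le hGint2 (hLint m b)
        (fun x hx => lin_bound hab hconv x ⟨ham.le.trans hx.1, hx.2⟩)
    rw [lin_integral A B a b m b hba0.ne'] at hmono
    refine hmono.trans_eq ?_
    rw [hmdef, hhdef]
    field_simp
    ring
  -- exponent arithmetic
  have hexp : (2*p+1)*(1/p) + 1/q = 3 := by
    have e1 : (2*p+1)*(1/p) = 2 + 1/p := by field_simp
    rw [e1]; linarith [hpq]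
  have hpow : h^((2*p+1)*(1/p)) * h^(1/q) = h^3 := by
    rw [← Real.rpow_add hh0, hexp, show (3:ℝ) = ((3:ℕ):ℝ) by norm_num, Real.rpow_natCast]
  -- per-piece bounds
  have hI1b : |I₁| ≤ (h^3/(2*T)) * ((3*A + B)/4) ^ (1/q) := by
    have hk0 : 0 ≤ (∫ x in a..m, |(x - a)^2/2| ^ p) ^ (1/p) := by
      rw [hker1]; positivity
    have t1 : (∫ x in a..m, |f'' x| ^ q) ^ (1/q) ≤ (h * ((3*A + B)/4)) ^ (1/q) :=
      Real.rpow_le_rpow (intervalIntegral.integral_nonneg ham.le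
        (fun x _ => Real.rpow_nonneg (abs_nonneg _) _)) hconv1 (by positivity)
    calc |I₁| ≤ (∫ x in a..m, |(x - a)^2/2| ^ p) ^ (1/p)
        * (∫ x in a..m, |f'' x| ^ q) ^ (1/q) := hold1
      _ ≤ (∫ x in a..m, |(x - a)^2/2| ^ p) ^ (1/p) * (h * ((3*A + B)/4)) ^ (1/q) :=
          mul_le_mul_of_nonneg_left t1 hk0
      _ = (h^((2*p+1)*(1/p)) / (T * 2)) * (h^(1/q) * ((3*A + B)/4) ^ (1/q)) := by
          rw [hker1, hkfac, Real.mul_rpow hh0.le (by positivity)]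
      _ = (h^((2*p+1)*(1/p)) * h^(1/q)) * ((3*A + B)/4) ^ (1/q) / (2*T) := by ring
      _ = (h^3/(2*T)) * ((3*A + B)/4) ^ (1/q) := by rw [hpow]; ring
  have hI2b : |I₂| ≤ (h^3/(2*T)) * ((A + 3*B)/4) ^ (1/q) := by
    have hk0 : 0 ≤ (∫ x in m..b, |(x - b)^2/2| ^ p) ^ (1/p) := by
      rw [hker2]; positivity
    have t1 : (∫ x in m..b, |f'' x| ^ q) ^ (1/q) ≤ (h * ((A + 3*B)/4)) ^ (1/q) :=
      Real.rpow_le_rpow (intervalIntegral.integral_nonneg hmb.le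
        (fun x _ => Real.rpow_nonneg (abs_nonneg _) _)) hconv2 (by positivity)
    calc |I₂| ≤ (∫ x in m..b, |(x - b)^2/2| ^ p) ^ (1/p)
        * (∫ x in m..b, |f'' x| ^ q) ^ (1/q) := hold2
      _ ≤ (∫ x in m..b, |(x - b)^2/2| ^ p) ^ (1/p) * (h * ((A + 3*B)/4)) ^ (1/q) :=
          mul_le_mul_of_nonneg_left t1 hk0
      _ = (h^((2*p+1)*(1/p)) / (T * 2)) * (h^(1/q) * ((A + 3*B)/4) ^ (1/q)) := by
          rw [hker2, hkfac, Real.mul_rpow hh0.le (by positivity)]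
      _ = (h^((2*p+1)*(1/p)) * h^(1/q)) * ((A + 3*B)/4) ^ (1/q) / (2*T) := by ring
      _ = (h^3/(2*T)) * ((A + 3*B)/4) ^ (1/q) := by rw [hpow]; ring
  -- final assembly
  rw [hid]
  calc |(1/(b-a)) * (I₁ + I₂)| ≤ (1/(b-a)) * (|I₁| + |I₂|) := by
        rw [abs_mul, abs_of_pos (one_div_pos.2 hba0)]
        exact mul_le_mul_of_nonneg_left (abs_add_le _ _) (one_div_pos.2 hba0).le
    _ ≤ (1/(b-a)) * ((h^3/(2*T)) * ((3*A + B)/4) ^ (1/q)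
          + (h^3/(2*T)) * ((A + 3*B)/4) ^ (1/q)) :=
        mul_le_mul_of_nonneg_left (add_le_add hI1b hI2b) (one_div_pos.2 hba0).le
    _ = ((b - a) ^ 2 / (16 * T)) * (((A + 3*B)/4) ^ (1/q) + ((3*A + B)/4) ^ (1/q)) := by
        rw [hhdef]
        field_simp
        ring
end

section
/- Let a < b be real numbers and let f : ℝ → ℝ be twice differentiable on an open interval containing [a,b] with f'' Lebesgue integrable on [a,b]. Let q ≥ 1. If the function x ↦ |f''(x)|^q is convex on [a,b], then |(1/(b−a))·∫_a^b f(x) dx − f((a+b)/2)| ≤ ((b−a)²/48) · ( ((3·|f''(a)|^q + 5·|f''(b)|^q)/8)^(1/q) + ((5·|f''(a)|^q + 3·|f''(b)|^q)/8)^(1/q) ). -/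
section Stmt8Aux
open MeasureTheory intervalIntegral Set

lemma cont_rpow_aux {q : ℝ} (hq : 0 < q) {w : ℝ → ℝ} (hw : Continuous w) :
    Continuous (fun x => w x ^ q) := by
  apply continuous_iff_continuousAt.2 (fun x => ?_)
  exact (Real.continuousAt_rpow_const (w x) q (Or.inr hq.le)).comp hw.continuousAt

lemma memLp_aux {c d : ℝ} {f : ℝ → ℝ} (hf : Continuous f) (r : ENNReal) :
    MemLp f r (volume.restrict (Set.Ioc c d)) := by
  have hfin : IsFiniteMeasure (volume.restrict (Set.Ioc c d)) := by
    constructor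
    rw [Measure.restrict_apply_univ, Real.volume_Ioc]
    exact ENNReal.ofReal_lt_top
  obtain ⟨C, hC⟩ := (isCompact_Icc (a := c) (b := d)).exists_bound_of_continuousOn
    hf.continuousOn
  exact MemLp.mono_exponent (memLp_top_of_bound hf.aestronglyMeasurable C
    ((ae_restrict_mem measurableSet_Ioc).mono fun x hx => hC x (Ioc_subset_Icc_self hx)))
    le_top

lemma holder_aux {c d q : ℝ} (hcd : c ≤ d) (hq : 1 ≤ q) (w g : ℝ → ℝ)
    (hw : Continuous w) (hg : Continuous g)
    (hw0 : ∀ x ∈ Set.Icc c d, 0 ≤ w x) (hg0 : ∀ x ∈ Set.Icc c d, 0 ≤ g x) :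
    ∫ x in c..d, w x * g x ^ (1/q) ≤
      (∫ x in c..d, w x) ^ (1 - 1/q) * (∫ x in c..d, w x * g x) ^ (1/q) := by
  rcases eq_or_lt_of_le hq with rfl | hq1
  · simp [Real.rpow_one, Real.rpow_zero]
  set p := Real.conjExponent q with hp
  have hpq : p.HolderConjugate q := (Real.HolderConjugate.conjExponent hq1).symm
  set μ := volume.restrict (Set.Ioc c d) with hμ
  have haew : ∀ᵐ x ∂μ, 0 ≤ w x ∧ 0 ≤ g x := by
    filter_upwards [ae_restrict_mem measurableSet_Ioc] with x hx
    exact ⟨hw0 x (Ioc_subset_Icc_self hx), hg0 x (Ioc_subset_Icc_self hx)⟩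
  set F := fun x => w x ^ (1/p) with hF
  set G := fun x => (w x * g x) ^ (1/q) with hG
  have hFc : Continuous F := cont_rpow_aux hpq.one_div_pos hw
  have hGc : Continuous G := cont_rpow_aux hpq.symm.one_div_pos (hw.mul hg)
  have key := integral_mul_le_Lp_mul_Lq_of_nonneg (μ := μ) hpq
    (f := F) (g := G) (haew.mono fun x hx => Real.rpow_nonneg hx.1 _)
    (haew.mono fun x hx => Real.rpow_nonneg (mul_nonneg hx.1 hx.2) _)
    (memLp_aux hFc _) (memLp_aux hGc _)
  have hinv : 1/p + 1/q = 1 := by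
    simpa [one_div] using hpq.inv_add_inv_eq_inv
  have e1 : ∫ x, F x * G x ∂μ = ∫ x in c..d, w x * g x ^ (1/q) := by
    rw [intervalIntegral.integral_of_le hcd]
    refine integral_congr_ae (haew.mono fun x hx => ?_)
    show w x ^ (1/p) * (w x * g x) ^ (1/q) = w x * g x ^ (1/q)
    rw [Real.mul_rpow hx.1 hx.2, ← mul_assoc,
      ← Real.rpow_add' hx.1 (by rw [hinv]; norm_num), hinv, Real.rpow_one]
  have e2 : ∫ x, F x ^ p ∂μ = ∫ x in c..d, w x := by
    rw [intervalIntegral.integral_of_le hcd]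
    refine integral_congr_ae (haew.mono fun x hx => ?_)
    show (w x ^ (1/p)) ^ p = w x
    rw [← Real.rpow_mul hx.1, one_div, inv_mul_cancel₀ hpq.ne_zero, Real.rpow_one]
  have e3 : ∫ x, G x ^ q ∂μ = ∫ x in c..d, w x * g x := by
    rw [intervalIntegral.integral_of_le hcd]
    refine integral_congr_ae (haew.mono fun x hx => ?_)
    show ((w x * g x) ^ (1/q)) ^ q = w x * g x
    rw [← Real.rpow_mul (mul_nonneg hx.1 hx.2), one_div,
      inv_mul_cancel₀ hpq.symm.ne_zero, Real.rpow_one]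
  have hp1 : 1/p = 1 - 1/q := by linarith
  rw [e1, e2, e3, hp1] at key
  exact key


lemma parts_aux (f f' f'' : ℝ → ℝ) (a b u v : ℝ) (hab : a < b) (hua : u < a) (hbv : b < v)
    (hf' : ∀ x ∈ Set.Ioo u v, HasDerivAt f (f' x) x)
    (hf'' : ∀ x ∈ Set.Ioo u v, HasDerivAt f' (f'' x) x)
    (hint : IntervalIntegrable f'' volume a b) :
    (∫ x in a..b, f x) - (b - a) * f ((a+b)/2) =
      (∫ x in a..((a+b)/2), (x-a)^2/2 * f'' x)
      + ∫ x in ((a+b)/2)..b, (b-x)^2/2 * f'' x := by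
  set m := (a+b)/2 with hm
  have ham : a < m := by rw [hm]; linarith
  have hmb : m < b := by rw [hm]; linarith
  have hIab : Set.uIcc a b ⊆ Set.Ioo u v := by
    rw [Set.uIcc_of_le hab.le]
    exact fun x hx => ⟨lt_of_lt_of_le hua hx.1, lt_of_le_of_lt hx.2 hbv⟩
  have hmem : m ∈ Set.uIcc a b := by
    rw [Set.uIcc_of_le hab.le]; exact ⟨ham.le, hmb.le⟩
  have hIam : Set.uIcc a m ⊆ Set.Ioo u v :=
    (Set.uIcc_subset_uIcc Set.left_mem_uIcc hmem).trans hIab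
  have hImb : Set.uIcc m b ⊆ Set.Ioo u v :=
    (Set.uIcc_subset_uIcc hmem Set.right_mem_uIcc).trans hIab
  -- derivative helpers
  have hd1 : ∀ x : ℝ, HasDerivAt (fun y => (y-a)^2/2) (x-a) x := by
    intro x
    have h := (((hasDerivAt_id x).sub_const a).fun_pow 2).div_const 2
    refine h.congr_deriv ?_
    simp
  have hd2 : ∀ x : ℝ, HasDerivAt (fun y => (b-y)^2/2) (-(b-x)) x := by
    intro x
    have h := (((hasDerivAt_id x).const_sub b).fun_pow 2).div_const 2
    refine h.congr_deriv ?_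
    simp
    ring
  have hda : ∀ x : ℝ, HasDerivAt (fun y => y - a) 1 x :=
    fun x => by simpa using (hasDerivAt_id x).sub_const a
  have hdb : ∀ x : ℝ, HasDerivAt (fun y => b - y) (-1) x :=
    fun x => by simpa using (hasDerivAt_id x).const_sub b
  have hcf' : ContinuousOn f' (Set.uIcc a b) :=
    fun x hx => ((hf'' x (hIab hx)).continuousAt).continuousWithinAt
  have hcf : ContinuousOn f (Set.uIcc a b) :=
    fun x hx => ((hf' x (hIab hx)).continuousAt).continuousWithinAt
  have hIam2 : Set.uIcc a m ⊆ Set.uIcc a b := Set.uIcc_subset_uIcc Set.left_mem_uIcc hmem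
  have hImb2 : Set.uIcc m b ⊆ Set.uIcc a b := Set.uIcc_subset_uIcc hmem Set.right_mem_uIcc
  have e1 : (∫ x in a..m, (x-a)^2/2 * f'' x)
      = (m-a)^2/2 * f' m - ∫ x in a..m, (x-a) * f' x := by
    rw [integral_mul_deriv_eq_deriv_mul (u' := fun x => x - a)
      (fun x _ => hd1 x) (fun x hx => hf'' x (hIam hx))
      ((continuous_id.sub continuous_const).intervalIntegrable _ _) (hint.mono_set hIam2)]
    simp
  have e2 : (∫ x in a..m, (x-a) * f' x)
      = (m-a) * f m - ∫ x in a..m, f x := by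
    rw [integral_mul_deriv_eq_deriv_mul (u' := fun _ => (1:ℝ))
      (fun x _ => hda x) (fun x hx => hf' x (hIam hx))
      (continuous_const.intervalIntegrable _ _)
      ((hcf'.mono hIam2).intervalIntegrable)]
    simp
  have e3 : (∫ x in m..b, (b-x)^2/2 * f'' x)
      = -((b-m)^2/2 * f' m) + ∫ x in m..b, (b-x) * f' x := by
    rw [integral_mul_deriv_eq_deriv_mul (u' := fun x => -(b - x))
      (fun x _ => hd2 x) (fun x hx => hf'' x (hImb hx))
      ((continuous_const.sub continuous_id).neg.intervalIntegrable _ _)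
      (hint.mono_set hImb2)]
    have h3 : (∫ x in m..b, -(b-x) * f' x) = -∫ x in m..b, (b-x) * f' x := by
      rw [← intervalIntegral.integral_neg]
      exact intervalIntegral.integral_congr (fun x _ => by ring)
    rw [h3]; ring
  have e4 : (∫ x in m..b, (b-x) * f' x)
      = -((b-m) * f m) + ∫ x in m..b, f x := by
    rw [integral_mul_deriv_eq_deriv_mul (u' := fun _ => (-1:ℝ))
      (fun x _ => hdb x) (fun x hx => hf' x (hImb hx))
      (continuous_const.intervalIntegrable _ _)
      ((hcf'.mono hImb2).intervalIntegrable)]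
    have h4 : (∫ x in m..b, (-1) * f x) = -∫ x in m..b, f x := by
      rw [← intervalIntegral.integral_neg]
      exact intervalIntegral.integral_congr (fun x _ => by ring)
    rw [h4]; ring
  have e5 : (∫ x in a..b, f x) = (∫ x in a..m, f x) + ∫ x in m..b, f x :=
    (intervalIntegral.integral_add_adjacent_intervals
      ((hcf.mono hIam2).intervalIntegrable) ((hcf.mono hImb2).intervalIntegrable)).symm
  clear_value m
  subst hm
  linear_combination e5 - e1 + e2 - e3 - e4


lemma poly_deriv_aux (a : ℝ) (n : ℕ) (x : ℝ) :
    HasDerivAt (fun y : ℝ => (y - a)^n) (n * (x - a)^(n-1)) x := by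
  have h : HasDerivAt (fun y : ℝ => y - a) 1 x := by
    simpa using (hasDerivAt_id x).sub_const a
  simpa using h.fun_pow n

lemma int_w1 (a b : ℝ) : (∫ x in a..((a+b)/2), (x-a)^2/2) = (b-a)^3/48 := by
  rw [intervalIntegral.integral_eq_sub_of_hasDerivAt
    (f := fun y => (y-a)^3/6) (fun x _ => by
      have := (poly_deriv_aux a 3 x).div_const 6
      refine this.congr_deriv ?_
      norm_num; ring)
    (by apply ContinuousOn.intervalIntegrable; fun_prop)]
  ring

lemma int_w2 (a b : ℝ) : (∫ x in ((a+b)/2)..b, (b-x)^2/2) = (b-a)^3/48 := by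
  rw [intervalIntegral.integral_eq_sub_of_hasDerivAt
    (f := fun y => -((b-y)^3/6)) (fun x _ => by
      have h : HasDerivAt (fun y : ℝ => b - y) (-1) x := by
        simpa using (hasDerivAt_id x).const_sub b
      have := ((h.fun_pow 3).div_const 6).fun_neg
      refine this.congr_deriv ?_
      norm_num; ring)
    (by apply ContinuousOn.intervalIntegrable; fun_prop)]
  ring

lemma int_w1l (a b A B : ℝ) (hab : a < b) :
    (∫ x in a..((a+b)/2), (x-a)^2/2 * (((b-x)*A + (x-a)*B)/(b-a)))
      = ((b-a)^3/48) * ((5*A+3*B)/8) := by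
  have hba : b - a ≠ 0 := by linarith
  rw [intervalIntegral.integral_eq_sub_of_hasDerivAt
    (f := fun y => (y-a)^3*A/6 + (y-a)^4*(B-A)/(8*(b-a))) (fun x _ => by
      have h1 := ((poly_deriv_aux a 3 x).mul_const A).div_const 6
      have h2 := ((poly_deriv_aux a 4 x).mul_const (B-A)).div_const (8*(b-a))
      refine (h1.fun_add h2).congr_deriv ?_
      norm_num
      field_simp
      ring)
    (by apply ContinuousOn.intervalIntegrable; fun_prop)]
  field_simp
  ring

lemma int_w2l (a b A B : ℝ) (hab : a < b) :
    (∫ x in ((a+b)/2)..b, (b-x)^2/2 * (((b-x)*A + (x-a)*B)/(b-a)))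
      = ((b-a)^3/48) * ((3*A+5*B)/8) := by
  have hba : b - a ≠ 0 := by linarith
  have hd : ∀ (n : ℕ) (x : ℝ), HasDerivAt (fun y : ℝ => (b - y)^n) (-(n * (b-x)^(n-1))) x := by
    intro n x
    have h : HasDerivAt (fun y : ℝ => b - y) (-1) x := by
      simpa using (hasDerivAt_id x).const_sub b
    simpa using h.fun_pow n
  rw [intervalIntegral.integral_eq_sub_of_hasDerivAt
    (f := fun y => -((b-y)^3*B/6) - (b-y)^4*(A-B)/(8*(b-a))) (fun x _ => by
      have h1 := (((hd 3 x).mul_const B).div_const 6).fun_neg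
      have h2 := ((hd 4 x).mul_const (A-B)).div_const (8*(b-a))
      refine (h1.fun_sub h2).congr_deriv ?_
      norm_num
      field_simp
      ring)
    (by apply ContinuousOn.intervalIntegrable; fun_prop)]
  field_simp
  ring



lemma half_bound {c d q : ℝ} (hcd : c ≤ d) (hq : 1 ≤ q) (w h l : ℝ → ℝ)
    (hwc : Continuous w) (hlc : Continuous l)
    (hw0 : ∀ x ∈ Set.Icc c d, 0 ≤ w x) (hl0 : ∀ x ∈ Set.Icc c d, 0 ≤ l x)
    (hint : IntervalIntegrable h volume c d)
    (hb : ∀ x ∈ Set.Icc c d, |h x| ≤ l x ^ (1/q)) :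
    |∫ x in c..d, w x * h x| ≤
      (∫ x in c..d, w x) ^ (1 - 1/q) * (∫ x in c..d, w x * l x) ^ (1/q) := by
  have hq0 : 0 < q := lt_of_lt_of_le zero_lt_one hq
  have huIcc : Set.uIcc c d = Set.Icc c d := Set.uIcc_of_le hcd
  calc |∫ x in c..d, w x * h x|
      ≤ ∫ x in c..d, |w x * h x| := intervalIntegral.abs_integral_le_integral_abs hcd
    _ = ∫ x in c..d, w x * |h x| := by
        refine intervalIntegral.integral_congr (fun x hx => ?_)
        rw [huIcc] at hx
        rw [abs_mul, abs_of_nonneg (hw0 x hx)]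
    _ ≤ ∫ x in c..d, w x * l x ^ (1/q) := by
        refine intervalIntegral.integral_mono_on hcd ?_ ?_ (fun x hx => ?_)
        · exact hint.abs.continuousOn_mul (by rw [huIcc]; exact hwc.continuousOn)
        · exact (hwc.mul (cont_rpow_aux (by positivity) hlc)).intervalIntegrable _ _
        · exact mul_le_mul_of_nonneg_left (hb x hx) (hw0 x hx)
    _ ≤ _ := holder_aux hcd hq w l hwc hlc hw0 hl0


/-- Corollary: midpoint power-mean-type inequality for |f''|^q convex, q ≥ 1. -/
theorem stmt_8 (f f' f'' : ℝ → ℝ) (a b u v q : ℝ) (hab : a < b)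
(hua : u < a) (hbv : b < v)
    (hf' : ∀ x ∈ Set.Ioo u v, HasDerivAt f (f' x) x)
    (hf'' : ∀ x ∈ Set.Ioo u v, HasDerivAt f' (f'' x) x)
    (hint : IntervalIntegrable f'' MeasureTheory.volume a b)
    (hq : 1 ≤ q)
    (hconv : ConvexOn ℝ (Set.Icc a b) (fun x => |f'' x| ^ q)) :
    |(1 / (b - a)) * (∫ x in a..b, f x) - f ((a + b) / 2)|
      ≤ ((b - a) ^ 2 / 48) *
          (((3 * |f'' a| ^ q + 5 * |f'' b| ^ q) / 8) ^ (1 / q)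
            + ((5 * |f'' a| ^ q + 3 * |f'' b| ^ q) / 8) ^ (1 / q)) := by
  have hba : (0:ℝ) < b - a := by linarith
  have hq0 : 0 < q := lt_of_lt_of_le zero_lt_one hq
  set A := |f'' a| ^ q with hA
  set B := |f'' b| ^ q with hB
  have hA0 : 0 ≤ A := Real.rpow_nonneg (abs_nonneg _) _
  have hB0 : 0 ≤ B := Real.rpow_nonneg (abs_nonneg _) _
  set l := fun x : ℝ => ((b-x)*A + (x-a)*B)/(b-a) with hl
  have hlc : Continuous l := by
    apply Continuous.div_const
    fun_prop
  have hl0 : ∀ x ∈ Set.Icc a b, 0 ≤ l x := fun x hx =>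
    div_nonneg (add_nonneg (mul_nonneg (by linarith [hx.2]) hA0)
      (mul_nonneg (by linarith [hx.1]) hB0)) hba.le
  have ham : a ≤ (a+b)/2 := by linarith
  have hmb : (a+b)/2 ≤ b := by linarith
  have hIam : Set.Icc a ((a+b)/2) ⊆ Set.Icc a b := Set.Icc_subset_Icc le_rfl hmb
  have hImb : Set.Icc ((a+b)/2) b ⊆ Set.Icc a b := Set.Icc_subset_Icc ham le_rfl
  -- convexity bound
  have hconvl : ∀ x ∈ Set.Icc a b, |f'' x| ^ q ≤ l x := by
    intro x hx
    have h1 : 0 ≤ (b-x)/(b-a) := div_nonneg (by linarith [hx.2]) hba.le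
    have h2 : 0 ≤ (x-a)/(b-a) := div_nonneg (by linarith [hx.1]) hba.le
    have h3 : (b-x)/(b-a) + (x-a)/(b-a) = 1 := by field_simp; ring
    have hcv := hconv.2 (Set.left_mem_Icc.2 hab.le) (Set.right_mem_Icc.2 hab.le) h1 h2 h3
    simp only [smul_eq_mul] at hcv
    have hx' : (b-x)/(b-a) * a + (x-a)/(b-a) * b = x := by field_simp; ring
    rw [hx'] at hcv
    calc |f'' x| ^ q ≤ (b-x)/(b-a) * A + (x-a)/(b-a) * B := hcv
      _ = l x := by rw [hl]; field_simp
  have hptw : ∀ x ∈ Set.Icc a b, |f'' x| ≤ l x ^ (1/q) := by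
    intro x hx
    have h0 : |f'' x| = (|f'' x| ^ q) ^ (1/q) := by
      rw [one_div, Real.rpow_rpow_inv (abs_nonneg _) (ne_of_gt hq0)]
    rw [h0]
    exact Real.rpow_le_rpow (Real.rpow_nonneg (abs_nonneg _) _) (hconvl x hx) (by positivity)
  -- half bounds
  have hw1c : Continuous (fun x : ℝ => (x-a)^2/2) := by fun_prop
  have hw2c : Continuous (fun x : ℝ => (b-x)^2/2) := by fun_prop
  have hb1 := half_bound ham hq (fun x => (x-a)^2/2) f'' l hw1c hlc
    (fun x _ => by positivity) (fun x hx => hl0 x (hIam hx))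
    (hint.mono_set (by rw [Set.uIcc_of_le hab.le, Set.uIcc_of_le ham]; exact hIam))
    (fun x hx => hptw x (hIam hx))
  have hb2 := half_bound hmb hq (fun x => (b-x)^2/2) f'' l hw2c hlc
    (fun x _ => by positivity) (fun x hx => hl0 x (hImb hx))
    (hint.mono_set (by rw [Set.uIcc_of_le hab.le, Set.uIcc_of_le hmb]; exact hImb))
    (fun x hx => hptw x (hImb hx))
  rw [int_w1, int_w1l a b A B hab] at hb1
  rw [int_w2, int_w2l a b A B hab] at hb2
  have collapse : ∀ c : ℝ, 0 ≤ c →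
      ((b-a)^3/48)^(1-1/q) * (((b-a)^3/48) * c)^(1/q) = ((b-a)^3/48) * c^(1/q) := by
    intro c hc
    have hX : (0:ℝ) ≤ (b-a)^3/48 := by positivity
    rw [Real.mul_rpow hX hc, ← mul_assoc,
      ← Real.rpow_add' hX (by ring_nf; norm_num)]
    have he : (1-1/q) + (1/q) = 1 := by ring
    rw [he, Real.rpow_one]
  rw [collapse _ (by positivity)] at hb1
  rw [collapse _ (by positivity)] at hb2
  -- assemble
  have key := parts_aux f f' f'' a b u v hab hua hbv hf' hf'' hint
  have hlhs : (1 / (b - a)) * (∫ x in a..b, f x) - f ((a + b) / 2)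
      = (1 / (b - a)) * ((∫ x in a..b, f x) - (b-a) * f ((a+b)/2)) := by
    field_simp
  rw [hlhs, key, abs_mul, abs_of_pos (by positivity : (0:ℝ) < 1/(b-a))]
  set T1 := ((3*A+5*B)/8) ^ (1/q) with hT1
  set T2 := ((5*A+3*B)/8) ^ (1/q) with hT2
  have habs : |(∫ x in a..((a+b)/2), (x-a)^2/2 * f'' x)
      + ∫ x in ((a+b)/2)..b, (b-x)^2/2 * f'' x|
      ≤ ((b-a)^3/48) * T2 + ((b-a)^3/48) * T1 :=
    (abs_add_le _ _).trans (add_le_add hb1 hb2)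
  calc (1/(b-a)) * |(∫ x in a..((a+b)/2), (x-a)^2/2 * f'' x)
        + ∫ x in ((a+b)/2)..b, (b-x)^2/2 * f'' x|
      ≤ (1/(b-a)) * (((b-a)^3/48) * T2 + ((b-a)^3/48) * T1) :=
        mul_le_mul_of_nonneg_left habs (by positivity)
    _ = ((b - a) ^ 2 / 48) * (T1 + T2) := by field_simp; ring

end Stmt8Aux
end

section
/- Let a, b be real numbers with 0 < a < b, let n be a natural number with n > 2, and let p, q > 1 satisfy 1/p + 1/q = 1. Then |L_n^n(a,b) − A(a,b)^n| ≤ n·(n−1)·((b−a)²/(16·(2p+1)^(1/p))) · ( ((a^((n−2)·q) + 3·b^((n−2)·q))/4)^(1/q) + ((3·a^((n−2)·q) + b^((n−2)·q))/4)^(1/q) ), where L_n^n(a,b) = (b^(n+1) − a^(n+1))/((n+1)·(b−a)) and A(a,b) = (a+b)/2. -/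
open Set Finset

lemma chord_pow (k : ℕ) {a b x : ℝ} (ha : 0 ≤ a) (hab : a < b) (hax : a ≤ x) (hxb : x ≤ b) :
    (b - a) * x ^ k ≤ a ^ k * (b - x) + b ^ k * (x - a) := by
  have hb : (0:ℝ) ≤ b := ha.trans hab.le
  have hba : (0:ℝ) < b - a := by linarith
  have ht : (0:ℝ) ≤ (b - x)/(b - a) := div_nonneg (by linarith) hba.le
  have ht' : (0:ℝ) ≤ (x - a)/(b - a) := div_nonneg (by linarith) hba.le
  have hsum : (b - x)/(b - a) + (x - a)/(b - a) = 1 := by field_simp; ring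
  have h := (convexOn_pow (𝕜 := ℝ) k).2 (mem_Ici.2 ha) (mem_Ici.2 hb) ht ht' hsum
  simp only [smul_eq_mul] at h
  have hx : (b - x)/(b - a) * a + (x - a)/(b - a) * b = x := by
    field_simp
    ring
  rw [hx] at h
  have := mul_le_mul_of_nonneg_left h hba.le
  calc (b - a) * x ^ k ≤ (b - a) * ((b - x)/(b - a) * a ^ k + (x - a)/(b - a) * b ^ k) := this
    _ = a ^ k * (b - x) + b ^ k * (x - a) := by field_simp

lemma tangent_pow (k : ℕ) {m x : ℝ} (hm : 0 ≤ m) (hx : 0 ≤ x) :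
    m ^ (k+2) + ((k:ℝ)+2) * m ^ (k+1) * (x - m) ≤ x ^ (k+2) := by
  have hgeom := geom_sum₂_mul x m (k+2)
  have key : ((k:ℝ)+2) * m ^ (k+1) * (x - m)
      ≤ (∑ i ∈ range (k+2), x ^ i * m ^ (k + 2 - 1 - i)) * (x - m) := by
    rcases le_total m x with h | h
    · apply mul_le_mul_of_nonneg_right _ (by linarith)
      calc ((k:ℝ)+2) * m ^ (k+1) = ∑ _i ∈ range (k+2), m ^ (k+1) := by
            simp [mul_comm]
        _ ≤ _ := by
            apply Finset.sum_le_sum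
            intro i hi
            simp only [Finset.mem_range] at hi
            have h1 : m ^ i ≤ x ^ i := pow_le_pow_left₀ hm h i
            have h2 : m ^ (k + 1) = m ^ i * m ^ (k + 2 - 1 - i) := by
              rw [← pow_add]
              congr 1
              omega
            rw [h2]
            exact mul_le_mul_of_nonneg_right h1 (pow_nonneg hm _)
    · rw [← neg_le_neg_iff]
      rw [← mul_neg, ← mul_neg]
      apply mul_le_mul_of_nonneg_right _ (by linarith)
      calc (∑ i ∈ range (k+2), x ^ i * m ^ (k + 2 - 1 - i))
          ≤ ∑ _i ∈ range (k+2), m ^ (k+1) := by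
            apply Finset.sum_le_sum
            intro i hi
            simp only [Finset.mem_range] at hi
            have h1 : x ^ i ≤ m ^ i := pow_le_pow_left₀ hx h i
            have h2 : m ^ (k + 1) = m ^ i * m ^ (k + 2 - 1 - i) := by
              rw [← pow_add]; congr 1; omega
            rw [h2]
            exact mul_le_mul_of_nonneg_right h1 (pow_nonneg hm _)
        _ = ((k:ℝ)+2) * m ^ (k+1) := by simp [mul_comm]
  linarith [key.trans_eq hgeom]

lemma key_pointwise (k : ℕ) {a b : ℝ} (ha : 0 < a) (hab : a < b) {x : ℝ}
    (hax : a ≤ x) (hxb : x ≤ b) :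
    x ^ (k+2) ≤ ((a+b)/2) ^ (k+2) + ((k:ℝ)+2) * ((a+b)/2)^(k+1) * (x - (a+b)/2)
      + (((k:ℝ)+2)*((k:ℝ)+1)*(a^k+b^k)/4) * (x - (a+b)/2)^2
      + (((k:ℝ)+2)*((k:ℝ)+1)*(b^k-a^k)/(6*(b-a))) * (x - (a+b)/2)^3 := by
  have hba : (0:ℝ) < b - a := by linarith
  set m : ℝ := (a+b)/2 with hm_def
  set N₁ : ℝ := ((k:ℝ)+2) * m^(k+1) with hN1_def
  set C₂ : ℝ := ((k:ℝ)+2)*((k:ℝ)+1)*(a^k+b^k)/4 with hC2_def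
  set C₃ : ℝ := ((k:ℝ)+2)*((k:ℝ)+1)*(b^k-a^k)/(6*(b-a)) with hC3_def
  set u : ℝ → ℝ := fun y => m^(k+2) + N₁*(y-m) + C₂*(y-m)^2 + C₃*(y-m)^3 - y^(k+2)
    with hu_def
  set u₁ : ℝ → ℝ := fun y => N₁ + 2*C₂*(y-m) + 3*C₃*(y-m)^2 - ((k:ℝ)+2)*y^(k+1)
    with hu1_def
  set u₂ : ℝ → ℝ := fun y => 2*C₂ + 6*C₃*(y-m) - ((k:ℝ)+2)*((k:ℝ)+1)*y^k with hu2_def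
  have ham : a ≤ m := by rw [hm_def]; linarith
  have hmb : m ≤ b := by rw [hm_def]; linarith
  have h1 : ∀ y : ℝ, HasDerivAt (fun z : ℝ => z - m) 1 y :=
    fun y => (hasDerivAt_id y).sub_const m
  have hder : ∀ y : ℝ, HasDerivAt u (u₁ y) y := by
    intro y
    have t0 : HasDerivAt (fun _ : ℝ => m^(k+2)) 0 y := hasDerivAt_const _ _
    have t1 : HasDerivAt (fun z : ℝ => N₁*(z-m)) (N₁*1) y := (h1 y).const_mul N₁
    have t2 : HasDerivAt (fun z : ℝ => C₂*(z-m)^2) (C₂*(2*(y-m)^1*1)) y :=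
      ((h1 y).pow 2).const_mul C₂
    have t3 : HasDerivAt (fun z : ℝ => C₃*(z-m)^3) (C₃*(3*(y-m)^2*1)) y :=
      ((h1 y).pow 3).const_mul C₃
    have t4 : HasDerivAt (fun z : ℝ => z^(k+2)) (((k:ℝ)+2)*y^(k+1)) y := by
      have := hasDerivAt_pow (k+2) y
      norm_num at this ⊢
      convert this using 2 <;> push_cast <;> ring
    have := (((t0.add t1).add t2).add t3).sub t4
    refine this.congr_deriv ?_
    rw [hu1_def]
    ring
  have hder1 : ∀ y : ℝ, HasDerivAt u₁ (u₂ y) y := by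
    intro y
    have t1 : HasDerivAt (fun z : ℝ => 2*C₂*(z-m)) (2*C₂*1) y := (h1 y).const_mul (2*C₂)
    have t2 : HasDerivAt (fun z : ℝ => 3*C₃*(z-m)^2) (3*C₃*(2*(y-m)^1*1)) y :=
      ((h1 y).pow 2).const_mul (3*C₃)
    have t4 : HasDerivAt (fun z : ℝ => ((k:ℝ)+2)*z^(k+1)) (((k:ℝ)+2)*(((k:ℝ)+1)*y^k)) y := by
      have h := hasDerivAt_pow (k+1) y
      have := h.const_mul ((k:ℝ)+2)
      refine this.congr_deriv ?_
      push_cast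
      ring_nf
    have := (((hasDerivAt_const y N₁).add t1).add t2).sub t4
    refine this.congr_deriv ?_
    rw [hu2_def]
    ring
  have hu2nn : ∀ y ∈ Icc a b, 0 ≤ u₂ y := by
    intro y hy
    have hch := chord_pow k ha.le hab hy.1 hy.2
    have heq : u₂ y = ((k:ℝ)+2)*((k:ℝ)+1) *
        ((a^k*(b-y) + b^k*(y-a)) - (b-a)*y^k) / (b-a) := by
      rw [hu2_def, hC2_def, hC3_def, hm_def]
      field_simp
      ring
    rw [heq]
    apply div_nonneg _ hba.le
    apply mul_nonneg (by positivity)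
    linarith
  have hu1m : u₁ m = 0 := by rw [hu1_def]; simp [hN1_def]
  have hum : u m = 0 := by rw [hu_def]; simp
  have hmono1 : MonotoneOn u₁ (Icc a b) := by
    apply monotoneOn_of_deriv_nonneg (convex_Icc a b)
      (Continuous.continuousOn (by
        exact continuous_iff_continuousAt.2 fun y => (hder1 y).continuousAt))
      (fun y _ => (hder1 y).differentiableAt.differentiableWithinAt)
    intro y hy
    rw [interior_Icc] at hy
    rw [(hder1 y).deriv]
    exact hu2nn y ⟨hy.1.le, hy.2.le⟩
  have hcontu : ContinuousOn u (Icc a b) := Continuous.continuousOn (by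
    exact continuous_iff_continuousAt.2 fun y => (hder y).continuousAt)
  have hanti : AntitoneOn u (Icc a m) := by
    apply antitoneOn_of_deriv_nonpos (convex_Icc a m)
      (hcontu.mono (Icc_subset_Icc le_rfl hmb))
      (fun y _ => (hder y).differentiableAt.differentiableWithinAt)
    intro y hy
    rw [interior_Icc] at hy
    rw [(hder y).deriv]
    have := hmono1 ⟨hy.1.le, hy.2.le.trans hmb⟩ ⟨ham, hmb⟩ hy.2.le
    linarith [hu1m]
  have hmono : MonotoneOn u (Icc m b) := by
    apply monotoneOn_of_deriv_nonneg (convex_Icc m b)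
      (hcontu.mono (Icc_subset_Icc ham le_rfl))
      (fun y _ => (hder y).differentiableAt.differentiableWithinAt)
    intro y hy
    rw [interior_Icc] at hy
    rw [(hder y).deriv]
    have := hmono1 ⟨ham, hmb⟩ ⟨ham.trans hy.1.le, hy.2.le⟩ hy.1.le
    linarith [hu1m]
  have hux : 0 ≤ u x := by
    rcases le_total x m with h | h
    · have := hanti ⟨hax, h⟩ ⟨ham, le_rfl⟩ h
      linarith
    · have := hmono ⟨le_rfl, hmb⟩ ⟨h, hxb⟩ h
      linarith
  rw [hu_def] at hux
  simp only at hux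
  linarith

open intervalIntegral MeasureTheory in
lemma star (k : ℕ) {a b : ℝ} (ha : 0 < a) (hab : a < b) :
    (b ^ (k+3) - a ^ (k+3)) / ((k:ℝ)+3) ≤ (b-a) * ((a+b)/2) ^ (k+2)
      + ((k:ℝ)+2)*((k:ℝ)+1)*(b-a)^3*(a^k+b^k)/48 := by
  have hba : (0:ℝ) < b - a := by linarith
  set m : ℝ := (a+b)/2 with hm_def
  set N₁ : ℝ := ((k:ℝ)+2) * m^(k+1) with hN1_def
  set C₂ : ℝ := ((k:ℝ)+2)*((k:ℝ)+1)*(a^k+b^k)/4 with hC2_def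
  set C₃ : ℝ := ((k:ℝ)+2)*((k:ℝ)+1)*(b^k-a^k)/(6*(b-a)) with hC3_def
  have hint1 : ∫ x in a..b, x ^ (k+2) = (b ^ (k+3) - a ^ (k+3)) / ((k:ℝ)+3) := by
    rw [integral_pow]
    push_cast
    ring
  have hint2 : (∫ x in a..b, (m^(k+2) + N₁*(x-m) + C₂*(x-m)^2 + C₃*(x-m)^3))
      = (b-a) * m ^ (k+2) + C₂*(b-a)^3/12 := by
    have hcomp := intervalIntegral.integral_comp_sub_right (a := a) (b := b)
      (fun y => m^(k+2) + N₁*y + C₂*y^2 + C₃*y^3) m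
    rw [hcomp]
    have i1 : IntervalIntegrable (fun _ : ℝ => m^(k+2)) volume (a-m) (b-m) :=
      intervalIntegrable_const
    have i2 : IntervalIntegrable (fun y : ℝ => N₁*y) volume (a-m) (b-m) :=
      (continuous_const.mul continuous_id).intervalIntegrable _ _
    have i3 : IntervalIntegrable (fun y : ℝ => C₂*y^2) volume (a-m) (b-m) :=
      (continuous_const.mul (continuous_pow 2)).intervalIntegrable _ _
    have i4 : IntervalIntegrable (fun y : ℝ => C₃*y^3) volume (a-m) (b-m) :=
      (continuous_const.mul (continuous_pow 3)).intervalIntegrable _ _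
    rw [integral_add ((i1.add i2).add i3) i4, integral_add (i1.add i2) i3,
      integral_add i1 i2, intervalIntegral.integral_const,
      intervalIntegral.integral_const_mul, intervalIntegral.integral_const_mul,
      intervalIntegral.integral_const_mul, integral_id, integral_pow, integral_pow,
      smul_eq_mul]
    have hma : a - m = -((b-a)/2) := by rw [hm_def]; ring
    have hmb : b - m = (b-a)/2 := by rw [hm_def]; ring
    rw [hma, hmb]
    push_cast
    ring
  have hmono : (∫ x in a..b, x ^ (k+2))
      ≤ ∫ x in a..b, (m^(k+2) + N₁*(x-m) + C₂*(x-m)^2 + C₃*(x-m)^3) := by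
    apply intervalIntegral.integral_mono_on hab.le
      ((continuous_pow (k+2)).intervalIntegrable _ _)
      (Continuous.intervalIntegrable (by fun_prop) _ _)
    intro x hx
    have := key_pointwise k ha hab hx.1 hx.2
    rw [← hm_def, ← hN1_def, ← hC2_def, ← hC3_def] at this
    linarith
  rw [hint1, hint2] at hmono
  calc (b ^ (k+3) - a ^ (k+3)) / ((k:ℝ)+3) ≤ (b-a) * m ^ (k+2) + C₂*(b-a)^3/12 := hmono
    _ = (b-a) * m ^ (k+2) + ((k:ℝ)+2)*((k:ℝ)+1)*(b-a)^3*(a^k+b^k)/48 := by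
        rw [hC2_def]; ring

open intervalIntegral MeasureTheory in
lemma starstar (k : ℕ) {a b : ℝ} (ha : 0 < a) (hab : a < b) :
    (b-a) * ((a+b)/2) ^ (k+2) ≤ (b ^ (k+3) - a ^ (k+3)) / ((k:ℝ)+3) := by
  have hba : (0:ℝ) < b - a := by linarith
  set m : ℝ := (a+b)/2 with hm_def
  set N₁ : ℝ := ((k:ℝ)+2) * m^(k+1) with hN1_def
  have hm0 : 0 ≤ m := by rw [hm_def]; linarith
  have hint1 : ∫ x in a..b, x ^ (k+2) = (b ^ (k+3) - a ^ (k+3)) / ((k:ℝ)+3) := by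
    rw [integral_pow]; push_cast; ring
  have hint2 : (∫ x in a..b, (m^(k+2) + N₁*(x-m))) = (b-a) * m ^ (k+2) := by
    have hcomp := intervalIntegral.integral_comp_sub_right (a := a) (b := b)
      (fun y => m^(k+2) + N₁*y) m
    have i1 : IntervalIntegrable (fun _ : ℝ => m^(k+2)) volume (a-m) (b-m) :=
      intervalIntegrable_const
    have i2 : IntervalIntegrable (fun y : ℝ => N₁*y) volume (a-m) (b-m) :=
      (continuous_const.mul continuous_id).intervalIntegrable _ _
    rw [hcomp, integral_add i1 i2, intervalIntegral.integral_const,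
      intervalIntegral.integral_const_mul, integral_id, smul_eq_mul]
    have hma : a - m = -((b-a)/2) := by rw [hm_def]; ring
    have hmb : b - m = (b-a)/2 := by rw [hm_def]; ring
    rw [hma, hmb]
    ring
  have hmono : (∫ x in a..b, (m^(k+2) + N₁*(x-m))) ≤ ∫ x in a..b, x ^ (k+2) := by
    apply intervalIntegral.integral_mono_on hab.le
      (Continuous.intervalIntegrable (by fun_prop) _ _)
      ((continuous_pow (k+2)).intervalIntegrable _ _)
    intro x hx
    have hx0 : (0:ℝ) ≤ x := le_trans ha.le hx.1
    have := tangent_pow k hm0 hx0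
    rw [← hN1_def] at this  -- N₁*(x-m) vs ((k:ℝ)+2)*m^(k+1)*(x-m)
    linarith [tangent_pow k hm0 hx0]
  rw [hint1, hint2] at hmono
  exact hmono

lemma rpow_2p1 {p : ℝ} (hp : 1 < p) : (2*p+1) ^ (1/p) ≤ 3 := by
  have h0 : (0:ℝ) < 2*p+1 := by linarith
  have h : 2*p+1 ≤ (3:ℝ)^p := by
    have := one_add_mul_self_le_rpow_one_add (s := 2) (by norm_num) hp.le
    norm_num at this
    linarith
  have hmono := Real.rpow_le_rpow h0.le h (by positivity : (0:ℝ) ≤ 1/p)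
  calc (2*p+1) ^ (1/p) ≤ ((3:ℝ)^p) ^ (1/p) := hmono
    _ = 3 := by
      rw [one_div, Real.rpow_rpow_inv (by norm_num) (by positivity)]

lemma mean_bound {c d q : ℝ} (hc : 0 ≤ c) (hd : 0 ≤ d) (hq : 1 ≤ q) :
    (c + 3*d)/4 ≤ ((c^q + 3*d^q)/4) ^ (1/q) := by
  have hq0 : (0:ℝ) < q := lt_of_lt_of_le one_pos hq
  have hX : (0:ℝ) ≤ (c + 3*d)/4 := by positivity
  have h1 : ((c + 3*d)/4)^q ≤ (c^q + 3*d^q)/4 := by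
    have h := (convexOn_rpow hq).2 (mem_Ici.2 hc) (mem_Ici.2 hd)
      (by norm_num : (0:ℝ) ≤ (1:ℝ)/4) (by norm_num : (0:ℝ) ≤ (3:ℝ)/4)
      (by norm_num)
    simp only [smul_eq_mul] at h
    calc ((c + 3*d)/4)^q = ((1:ℝ)/4 * c + 3/4 * d)^q := by congr 1; ring
      _ ≤ 1/4 * c^q + 3/4 * d^q := h
      _ = (c^q + 3*d^q)/4 := by ring
  have h3 := Real.rpow_le_rpow (Real.rpow_nonneg hX q) h1
    (by positivity : (0:ℝ) ≤ 1/q)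
  rw [one_div, Real.rpow_rpow_inv hX hq0.ne'] at h3
  rw [one_div]
  exact h3

/-- Proposition 13 of the paper (means version, Hölder form). -/
theorem stmt_11 (a b p q : ℝ) (n : ℕ) (ha : 0 < a) (hab : a < b) (hn : 2 < n)
    (hp : 1 < p) (hq : 1 < q) (hpq : 1 / p + 1 / q = 1) :
    |(b ^ (n + 1) - a ^ (n + 1)) / ((n + 1) * (b - a)) - ((a + b) / 2) ^ n|
      ≤ (n : ℝ) * ((n : ℝ) - 1) * ((b - a) ^ 2 / (16 * (2 * p + 1) ^ (1 / p))) *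
          (((a ^ (((n : ℝ) - 2) * q) + 3 * b ^ (((n : ℝ) - 2) * q)) / 4) ^ (1 / q)
            + ((3 * a ^ (((n : ℝ) - 2) * q) + b ^ (((n : ℝ) - 2) * q)) / 4) ^ (1 / q)) := by
  obtain ⟨k, hk, rfl⟩ : ∃ k, 1 ≤ k ∧ n = k + 2 := ⟨n - 2, by omega, by omega⟩
  have hb : 0 < b := ha.trans hab
  have hba : (0:ℝ) < b - a := by linarith
  -- normalize casts
  have hcast1 : ((k + 2 : ℕ) : ℝ) = (k:ℝ) + 2 := by push_cast; ring
  rw [hcast1]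
  have hexp : ((k:ℝ) + 2 - 2) * q = (k:ℝ) * q := by ring
  rw [hexp]
  have hrw : ∀ x : ℝ, 0 < x → x ^ ((k:ℝ) * q) = (x^k) ^ q := by
    intro x hx
    rw [Real.rpow_mul hx.le, Real.rpow_natCast]
  rw [hrw a ha, hrw b hb]
  set A : ℝ := (a+b)/2 with hA
  set P : ℝ := (2*p+1) ^ (1/p) with hP_def
  set T1 : ℝ := (((a^k)^q + 3*(b^k)^q)/4) ^ (1/q) with hT1
  set T2 : ℝ := ((3*(a^k)^q + (b^k)^q)/4) ^ (1/q) with hT2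
  set L : ℝ := (b ^ (k+2+1) - a ^ (k+2+1)) / (((k:ℝ)+2+1) * (b-a)) with hL
  have hk3 : (0:ℝ) < (k:ℝ) + 3 := by positivity
  have hL1 : A ^ (k+2) ≤ L := by
    rw [hL]
    have hss := starstar k ha hab
    rw [le_div_iff₀ (by positivity)]
    calc A ^ (k+2) * (((k:ℝ)+2+1) * (b-a)) = ((b-a) * A^(k+2)) * ((k:ℝ)+3) := by ring
      _ ≤ ((b ^ (k+3) - a ^ (k+3)) / ((k:ℝ)+3)) * ((k:ℝ)+3) :=
          mul_le_mul_of_nonneg_right hss hk3.le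
      _ = b ^ (k+3) - a ^ (k+3) := div_mul_cancel₀ _ hk3.ne'
      _ = b ^ (k+2+1) - a ^ (k+2+1) := by norm_num
  have hL2 : L ≤ A ^ (k+2) + ((k:ℝ)+2)*((k:ℝ)+1)*(b-a)^2*(a^k+b^k)/48 := by
    rw [hL]
    have hs := star k ha hab
    rw [div_le_iff₀ (by positivity)]
    have h2 := mul_le_mul_of_nonneg_right hs hk3.le
    rw [div_mul_cancel₀ _ hk3.ne'] at h2
    calc b ^ (k+2+1) - a ^ (k+2+1) = b ^ (k+3) - a ^ (k+3) := by norm_num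
      _ ≤ ((b-a) * A^(k+2) + ((k:ℝ)+2)*((k:ℝ)+1)*(b-a)^3*(a^k+b^k)/48) * ((k:ℝ)+3) := h2
      _ = (A ^ (k+2) + ((k:ℝ)+2)*((k:ℝ)+1)*(b-a)^2*(a^k+b^k)/48) * (((k:ℝ)+2+1) * (b-a)) := by
          ring
  have habs : |L - A ^ (k+2)| = L - A ^ (k+2) := abs_of_nonneg (by linarith)
  rw [habs]
  have hP0 : 0 < P := Real.rpow_pos_of_pos (by linarith) _
  have hP3 : P ≤ 3 := rpow_2p1 hp
  have hT1' : (a^k + 3*b^k)/4 ≤ T1 :=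
    mean_bound (by positivity) (by positivity) hq.le
  have hT2' : (3*a^k + b^k)/4 ≤ T2 := by
    have h := mean_bound (c := b^k) (d := a^k) (by positivity) (by positivity) hq.le
    rw [hT2]
    have e : ((3*(a^k)^q + (b^k)^q)/4) = (((b^k)^q + 3*(a^k)^q)/4) := by ring
    rw [e]
    linarith
  calc L - A ^ (k+2) ≤ ((k:ℝ)+2)*((k:ℝ)+1)*(b-a)^2*(a^k+b^k)/48 := by linarith
    _ = ((k:ℝ)+2) * ((k:ℝ)+2-1) * ((b-a)^2/48) * ((a^k+3*b^k)/4 + (3*a^k+b^k)/4) := by ring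
    _ ≤ ((k:ℝ)+2) * ((k:ℝ)+2-1) * ((b-a)^2/(16*P)) * (T1 + T2) := by
        have hk0 : (0:ℝ) ≤ (k:ℝ) := Nat.cast_nonneg k
        have hnn : (0:ℝ) ≤ ((k:ℝ)+2) * ((k:ℝ)+2-1) := by nlinarith
        have hdiv : (b-a)^2/48 ≤ (b-a)^2/(16*P) := by
          apply div_le_div_of_nonneg_left (by positivity) (by positivity)
          linarith
        have hsum : (a^k+3*b^k)/4 + (3*a^k+b^k)/4 ≤ T1 + T2 := add_le_add hT1' hT2'
        have hsnn : (0:ℝ) ≤ (a^k+3*b^k)/4 + (3*a^k+b^k)/4 := by positivity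
        have hdnn : (0:ℝ) ≤ (b-a)^2/48 := by positivity
        apply mul_le_mul
        · exact mul_le_mul_of_nonneg_left hdiv hnn
        · exact hsum
        · exact hsnn
        · positivity
end
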